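/- For all real numbers μ₁, μ₂ with 0 < |μ₁| < |μ₂| < 1, one has maxT(μ₁, βN(μ₂)) = |μ₂|/(1+√(1−μ₂²)) = min_{β∈ℝ} maxT(μ₂,β); that is, evaluating the first quantity at the coefficient optimal for μ₂ gives exactly the optimal value for μ₂. -/

import Mathlib

/-- The maximum of the moduli of the two complex roots (counted with multiplicity) of
`λ² − (1+β)·μ·λ + β = 0`; the roots are given by the quadratic formula
`((1+β)μ ± √((1+β)²μ² − 4β))/2` (complex square root via `cpow`). -/
noncomputable def maxT (μ β : ℝ) : ℝ :=
  max (‖(((((1 + β) * μ : ℝ) : ℂ) +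
        ((((1 + β) ^ 2 * μ ^ 2 - 4 * β : ℝ) : ℂ)) ^ ((1 : ℂ) / 2)) / 2)‖)
      (‖(((((1 + β) * μ : ℝ) : ℂ) -
        ((((1 + β) ^ 2 * μ ^ 2 - 4 * β : ℝ) : ℂ)) ^ ((1 : ℂ) / 2)) / 2)‖)

lemma cpow_half_nonneg (d : ℝ) (hd : 0 ≤ d) :
    ((d : ℂ)) ^ ((1 : ℂ)/2) = ((Real.sqrt d : ℝ) : ℂ) := by
  have h2 : ((1:ℂ)/2) = (((1:ℝ)/2 : ℝ) : ℂ) := by push_cast; ring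
  rw [h2, ← Complex.ofReal_cpow hd, Real.sqrt_eq_rpow]

lemma cpow_half_nonpos (d : ℝ) (hd : d ≤ 0) :
    ((d : ℂ)) ^ ((1 : ℂ)/2) = Complex.I * ((Real.sqrt (-d) : ℝ) : ℂ) := by
  rw [Complex.ofReal_cpow_of_nonpos hd]
  have h1 : (-(d : ℂ)) ^ ((1:ℂ)/2) = ((Real.sqrt (-d) : ℝ) : ℂ) := by
    have := cpow_half_nonneg (-d) (by linarith)
    push_cast at this ⊢
    exact this
  rw [h1]
  have h3 : (Real.pi : ℂ) * Complex.I * ((1:ℂ)/2) = ((Real.pi/2 : ℝ) : ℂ) * Complex.I := by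
    push_cast; ring
  rw [h3, Complex.exp_mul_I]
  push_cast
  simp [Real.cos_pi_div_two, Real.sin_pi_div_two]
  ring

lemma maxT_of_nonpos (μ β : ℝ) (h : (1+β)^2*μ^2 - 4*β ≤ 0) :
    maxT μ β = Real.sqrt β := by
  have hb := cpow_half_nonpos _ h
  have hb2 : (Real.sqrt (-((1+β)^2*μ^2 - 4*β)))^2 = -((1+β)^2*μ^2-4*β) :=
    Real.sq_sqrt (by linarith)
  set b := Real.sqrt (-((1+β)^2*μ^2 - 4*β)) with hbdef
  unfold maxT
  rw [show (1 + β) ^ 2 * μ ^ 2 - 4 * β = (1+β)^2*μ^2 - 4*β from rfl, hb]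
  rw [show (((1+β)*μ : ℝ):ℂ) + Complex.I * (b:ℝ) = ((((1+β)*μ : ℝ):ℂ) + (b:ℝ)*Complex.I) by ring]
  rw [show (((1+β)*μ : ℝ):ℂ) - Complex.I * (b:ℝ) = ((((1+β)*μ : ℝ):ℂ) + ((-b:ℝ):ℂ)*Complex.I) by push_cast; ring]
  rw [norm_div, norm_div, Complex.norm_add_mul_I, Complex.norm_add_mul_I, Complex.norm_two]
  rw [show ((1+β)*μ)^2 + (-b)^2 = ((1+β)*μ)^2 + b^2 by ring, max_self]
  rw [show ((1+β)*μ)^2 + b^2 = 2^2 * β by nlinarith [hb2]]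
  rw [Real.sqrt_mul (by positivity), Real.sqrt_sq (by norm_num)]
  ring

lemma maxT_of_nonneg (μ β : ℝ) (h : 0 ≤ (1+β)^2*μ^2 - 4*β) :
    maxT μ β = (|(1+β)*μ| + Real.sqrt ((1+β)^2*μ^2 - 4*β)) / 2 := by
  have hb := cpow_half_nonneg _ h
  set r := Real.sqrt ((1+β)^2*μ^2 - 4*β) with hrdef
  have hr0 : 0 ≤ r := Real.sqrt_nonneg _
  unfold maxT
  rw [show (1 + β) ^ 2 * μ ^ 2 - 4 * β = (1+β)^2*μ^2 - 4*β from rfl, hb]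
  rw [show (((1+β)*μ : ℝ):ℂ) + ((r:ℝ):ℂ) = (((1+β)*μ + r : ℝ):ℂ) by push_cast; ring]
  rw [show (((1+β)*μ : ℝ):ℂ) - ((r:ℝ):ℂ) = (((1+β)*μ - r : ℝ):ℂ) by push_cast; ring]
  rw [norm_div, norm_div, Complex.norm_real, Complex.norm_real, Real.norm_eq_abs, Real.norm_eq_abs, Complex.norm_two]
  rcases le_total 0 ((1+β)*μ) with ha | ha
  · rw [abs_of_nonneg ha, abs_of_nonneg (by linarith), max_eq_left]
    have : |(1+β)*μ - r| ≤ (1+β)*μ + r := abs_le.mpr ⟨by linarith, by linarith⟩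
    linarith
  · have e2 : |(1+β)*μ - r| = -((1+β)*μ) + r := by
      rw [abs_of_nonpos (by linarith)]; ring
    rw [abs_of_nonpos ha, e2, max_eq_right]
    have : |(1+β)*μ + r| ≤ -((1+β)*μ) + r := abs_le.mpr ⟨by linarith, by linarith⟩
    linarith

/-- The optimal coefficient `βN(μ) = (1 − √(1−μ²))/(1 + √(1−μ²))`. -/
noncomputable def βN (μ : ℝ) : ℝ :=
  (1 - Real.sqrt (1 - μ ^ 2)) / (1 + Real.sqrt (1 - μ ^ 2))

set_option maxHeartbeats 1000000 in
theorem stmt14 (μ₁ μ₂ : ℝ) (h0 : 0 < |μ₁|) (h12 : |μ₁| < |μ₂|) (h2 : |μ₂| < 1) :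
    maxT μ₁ (βN μ₂) = |μ₂| / (1 + Real.sqrt (1 - μ₂ ^ 2)) ∧
    (∀ β : ℝ, |μ₂| / (1 + Real.sqrt (1 - μ₂ ^ 2)) ≤ maxT μ₂ β) ∧
    maxT μ₂ (βN μ₂) = |μ₂| / (1 + Real.sqrt (1 - μ₂ ^ 2)) := by

  have hμ2 : 0 < |μ₂| := lt_trans h0 h12
  have hsq2 : μ₂^2 < 1 := by nlinarith [sq_abs μ₂]
  have hsq2' : 0 < μ₂^2 := by nlinarith [sq_abs μ₂]
  have hsq12 : μ₁^2 < μ₂^2 := by nlinarith [sq_abs μ₁, sq_abs μ₂, abs_nonneg μ₁]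
  set s := Real.sqrt (1 - μ₂^2) with hsdef
  have hs2 : s^2 = 1 - μ₂^2 := Real.sq_sqrt (by linarith)
  have hs0 : 0 < s := Real.sqrt_pos.mpr (by linarith)
  have hs1 : s < 1 := by nlinarith
  have hs1' : 0 < 1 + s := by linarith
  set t := |μ₂| / (1 + s) with htdef
  have ht0 : 0 < t := div_pos hμ2 hs1'
  have ht2 : t^2 = (1-s)/(1+s) := by
    rw [htdef, div_pow, sq_abs]
    rw [show μ₂^2 = (1-s)*(1+s) by nlinarith]
    field_simp
  have ht1 : t < 1 := by
    rw [htdef, div_lt_one hs1']; linarith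
  set B := βN μ₂ with hB
  have hβval : B = t^2 := by rw [hB, βN, ht2, ← hsdef]
  have hβpos : 0 < B := by rw [hβval]; positivity
  have hkey : (1 + B)^2 * μ₂^2 - 4 * B = 0 := by
    rw [hB, βN, ← hsdef]
    field_simp
    nlinarith
  have hsqrtβ : Real.sqrt B = t := by
    rw [hβval, Real.sqrt_sq ht0.le]
  have hμt : |μ₂| * (1 + t^2) = 2*t := by
    rw [ht2, htdef]
    field_simp
    nlinarith
  have hμt2 : |μ₂| = 2*t/(1+t^2) := by
    rw [eq_div_iff (by positivity), hμt]
  clear_value s t B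
  refine ⟨?_, ?_, ?_⟩
  · rw [maxT_of_nonpos _ _ (by nlinarith [sq_nonneg (1 + B)]), hsqrtβ]
  · intro β
    rcases le_or_gt ((1+β)^2*μ₂^2 - 4*β) 0 with hD | hD
    · rw [maxT_of_nonpos _ _ hD]
      have hβ0 : 0 ≤ β := by nlinarith [sq_nonneg ((1+β)*μ₂)]
      rw [Real.le_sqrt ht0.le hβ0]
      -- t^2 ≤ β
      rcases le_or_gt 1 β with hβ1 | hβ1
      · nlinarith
      · have h4 : (1-β)^2 ≤ (1+β)^2 * s^2 := by nlinarith
        have h5 : 1 - β ≤ (1+β)*s := by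
          nlinarith [mul_nonneg (by linarith : (0:ℝ) ≤ 1+β) hs0.le, sq_nonneg ((1+β)*s - (1-β))]
        rw [ht2, div_le_iff₀ hs1']
        nlinarith
    · rw [maxT_of_nonneg _ _ hD.le]
      set r := Real.sqrt ((1+β)^2*μ₂^2 - 4*β) with hrdef
      have hr0 : 0 ≤ r := Real.sqrt_nonneg _
      have hr2 : r^2 = (1+β)^2*μ₂^2 - 4*β := Real.sq_sqrt hD.le
      set M := (|(1+β)*μ₂| + r)/2 with hMdef
      set v := (|(1+β)*μ₂| - r)/2 with hvdef
      have hMv : M * v = β := by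
        have := sq_abs ((1+β)*μ₂)
        rw [hMdef, hvdef]
        nlinarith
      have hsum : M + v = |1+β| * |μ₂| := by
        rw [hMdef, hvdef, ← abs_mul]; ring
      have hvM : v ≤ M := by rw [hMdef, hvdef]; linarith
      have hvM' : -M ≤ v := by
        have : 0 ≤ M + v := by rw [hsum]; positivity
        linarith
      have hM0 : 0 ≤ M := by linarith
      clear_value r M v
      rcases le_or_gt β (-1) with hβ1 | hβ1
      · -- M^2 ≥ -β ≥ 1
        have : 1 ≤ M^2 := by nlinarith
        have : 1 ≤ M := by nlinarith
        linarith
      · have hsum' : M + v = (1+β) * |μ₂| := by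
          rw [hsum, abs_of_pos (by linarith)]
        have heq : (M+v)*(1+t^2) = 2*t*(1+M*v) := by
          rw [hsum', hMv]
          calc (1+β) * |μ₂| * (1+t^2) = (1+β) * (|μ₂| * (1+t^2)) := by ring
          _ = (1+β) * (2*t) := by rw [hμt]
          _ = 2*t*(1+β) := by ring
        by_contra hc
        push_neg at hc
        -- hc : M < t
        have h1 : 0 < t - M := by linarith
        have h4 : 0 < 1 - t*M := by nlinarith [mul_lt_mul_of_pos_left hc ht0]
        have h2 : 0 < 1 - t*v := by
          have := mul_le_mul_of_nonneg_left hvM ht0.le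
          linarith
        have h3 : 0 < t - v := by linarith
        linarith [mul_pos h1 h2, mul_pos h3 h4, heq]
  · rw [maxT_of_nonpos _ _ (le_of_eq hkey), hsqrtβ]
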